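/- A connected multigraph without cut-vertices (a block) on x' ≥ 2 vertices with y' ≥ x' + 1 edges contains two vertices joined by three internally disjoint paths; hence it contains a subdivision of K₂,₃ or three parallel edges between a pair of vertices. -/

import Mathlib

variable {V : Type*}

/-- A finite loopless multigraph on `V`, given by edge multiplicities. -/
structure Multigraph (V : Type*) where
  mult : Sym2 V → ℕ
  loopless : ∀ v : V, mult s(v, v) = 0

/-- Adjacency in a multigraph: at least one edge between the two vertices. -/
def MAdj (M : Multigraph V) (a b : V) : Prop := 0 < M.mult s(a, b)

/-- The sub-multigraph induced on the vertex set `B` is connected. -/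
def MConnOn (M : Multigraph V) (B : Set V) : Prop :=
  B.Nonempty ∧ ∀ a ∈ B, ∀ b ∈ B,
    Relation.ReflTransGen (fun x y => x ∈ B ∧ y ∈ B ∧ MAdj M x y) a b

/-- The induced sub-multigraph on `B` has no cut-vertex. -/
def MNoCutVertex (M : Multigraph V) (B : Set V) : Prop :=
  ∀ v ∈ B, (B \ {v}).Nonempty → MConnOn M (B \ {v})

/-- A block: a maximal connected induced sub-multigraph without cut-vertices. -/
def MIsBlock (M : Multigraph V) (B : Set V) : Prop :=
  MConnOn M B ∧ MNoCutVertex M B ∧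
    ∀ B' : Set V, B ⊆ B' → MConnOn M B' → MNoCutVertex M B' → B' = B

open scoped Classical in
/-- The number of edges (with multiplicity) having both endpoints in `B`. -/
noncomputable def edgesOn [Fintype V] [DecidableEq V] (M : Multigraph V) (B : Set V) : ℕ :=
  ∑ e : Sym2 V, if ∀ v ∈ e, v ∈ B then M.mult e else 0

/-- A path in a multigraph, recorded by its (duplicate-free) list of vertices from
`a` to `b`. -/
def MPath (M : Multigraph V) (a b : V) (l : List V) : Prop :=
  l.Chain' (MAdj M) ∧ l.Nodup ∧ l.head? = some a ∧ l.getLast? = some b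

/-- The internal vertices of a path given as a vertex list. -/
def internals (l : List V) : List V := (l.drop 1).dropLast

/-- How many times the vertex list `l` traverses the edge between `x` and `y`. -/
def stepCount [DecidableEq V] (l : List V) (x y : V) : ℕ :=
  (l.zip l.tail).count (x, y) + (l.zip l.tail).count (y, x)

/-! ### Auxiliary material -/

/-- The simple graph underlying a multigraph. -/
def MG (M : Multigraph V) : SimpleGraph V where
  Adj := MAdj M
  symm := by
    constructor
    intro a b h
    unfold MAdj at h ⊢
    rwa [Sym2.eq_swap]
  loopless := by
    constructor
    intro a h
    unfold MAdj at h
    rw [M.loopless] at h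
    exact Nat.lt_irrefl 0 h

instance (M : Multigraph V) : DecidableRel (MG M).Adj :=
  fun _ _ => Nat.decLt _ _

lemma tail_dropLast_comm {α : Type*} : ∀ (l : List α), l.tail.dropLast = l.dropLast.tail
  | [] => rfl
  | [_] => rfl
  | _ :: _ :: _ => by simp [List.dropLast_cons₂]

lemma internals_eq (l : List V) : internals l = l.dropLast.tail := by
  rw [internals, List.drop_one, tail_dropLast_comm]

lemma mem_tail_of_mem_internals {l : List V} {v : V} (h : v ∈ internals l) : v ∈ l.tail := by
  rw [internals, List.drop_one] at h
  exact (List.dropLast_sublist _).subset h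

lemma mem_of_mem_internals {l : List V} {v : V} (h : v ∈ internals l) : v ∈ l :=
  List.mem_of_mem_tail (mem_tail_of_mem_internals h)

lemma mem_dropLast_of_mem_internals {l : List V} {v : V} (h : v ∈ internals l) :
    v ∈ l.dropLast := by
  rw [internals_eq] at h
  exact List.mem_of_mem_tail h

lemma dropLast_reverse' {α : Type*} (l : List α) : l.reverse.dropLast = l.tail.reverse := by
  have h := List.tail_reverse (l := l.reverse)
  rw [List.reverse_reverse] at h
  rw [h, List.reverse_reverse]

lemma internals_reverse (l : List V) : internals l.reverse = (internals l).reverse := by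
  rw [internals, internals, List.drop_one, List.drop_one,
    List.tail_reverse, dropLast_reverse', tail_dropLast_comm]

lemma not_head_of_mem_internals {l : List V} {a v : V} (hnd : l.Nodup)
    (hh : l.head? = some a) (h : v ∈ internals l) : v ≠ a := by
  cases l with
  | nil => simp at hh
  | cons x t =>
    obtain rfl : x = a := by simpa using hh
    have hv : v ∈ t := mem_tail_of_mem_internals h
    rintro rfl
    exact (List.nodup_cons.mp hnd).1 hv

lemma not_last_of_mem_internals {l : List V} {b v : V} (hnd : l.Nodup)
    (hh : l.getLast? = some b) (h : v ∈ internals l) : v ≠ b := by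
  have hne : l ≠ [] := by rintro rfl; simp at hh
  have hb : l.getLast hne = b := by
    rw [List.getLast?_eq_getLast_of_ne_nil hne] at hh
    simpa using hh
  have hsplit := List.dropLast_append_getLast hne
  rw [← hsplit] at hnd
  have hdisj := (List.nodup_append'.mp hnd).2.2
  have hv : v ∈ l.dropLast := mem_dropLast_of_mem_internals h
  rintro rfl
  exact hdisj hv (by rw [hb]; exact List.mem_singleton_self _)

/-- The unordered edges traversed by a vertex list. -/
def sym2Steps (l : List V) : List (Sym2 V) := (l.zip l.tail).map fun p => s(p.1, p.2)

lemma sym2Steps_support {G : SimpleGraph V} {u v : V} (w : G.Walk u v) :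
    sym2Steps w.support = w.edges := by
  induction w with
  | nil => rfl
  | cons h p ih =>
    rw [SimpleGraph.Walk.support_cons, SimpleGraph.Walk.edges_cons, ← ih, p.support_eq_cons]
    rfl

lemma count_zip_eq_zero_left [DecidableEq V] {l : List V} {x y : V} (h : x ∉ l) :
    (l.zip l.tail).count (x, y) = 0 :=
  List.count_eq_zero.mpr fun hm => h (List.of_mem_zip hm).1

lemma count_zip_eq_zero_right [DecidableEq V] {l : List V} {x y : V} (h : y ∉ l) :
    (l.zip l.tail).count (x, y) = 0 :=
  List.count_eq_zero.mpr fun hm => h (List.mem_of_mem_tail (List.of_mem_zip hm).2)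

lemma stepCount_le_one [DecidableEq V] :
    ∀ (l : List V), l.Nodup → ∀ x y : V, stepCount l x y ≤ 1 := by
  intro l
  induction l with
  | nil => intro _ x y; simp [stepCount]
  | cons a t ih =>
    intro hnd x y
    rw [List.nodup_cons] at hnd
    cases t with
    | nil => simp [stepCount]
    | cons b t' =>
      have hab : a ≠ b := by rintro rfl; exact hnd.1 (List.mem_cons_self)
      have hz : ((a :: b :: t').zip (a :: b :: t').tail)
          = (a, b) :: ((b :: t').zip ((b :: t').tail)) := rfl
      by_cases h1 : (x, y) = (a, b)
      · have hx' : x = a := congrArg Prod.fst h1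
        have hy' : y = b := congrArg Prod.snd h1
        have c1 : ((b :: t').zip ((b :: t').tail)).count (x, y) = 0 :=
          count_zip_eq_zero_left (by rw [hx']; exact hnd.1)
        have c2 : ((b :: t').zip ((b :: t').tail)).count (y, x) = 0 :=
          count_zip_eq_zero_right (by rw [hx']; exact hnd.1)
        have hne2 : (a, b) ≠ (y, x) := by
          intro h
          exact hab ((Prod.ext_iff.mp h).1.trans hy')
        unfold stepCount
        rw [hz, List.count_cons, List.count_cons, c1, c2]
        simp only [beq_iff_eq]
        rw [if_pos h1.symm, if_neg hne2]
      · by_cases h2 : (y, x) = (a, b)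
        · have hy' : y = a := congrArg Prod.fst h2
          have hx' : x = b := congrArg Prod.snd h2
          have c1 : ((b :: t').zip ((b :: t').tail)).count (x, y) = 0 :=
            count_zip_eq_zero_right (by rw [hy']; exact hnd.1)
          have c2 : ((b :: t').zip ((b :: t').tail)).count (y, x) = 0 :=
            count_zip_eq_zero_left (by rw [hy']; exact hnd.1)
          have hne1 : (a, b) ≠ (x, y) := by
            intro h
            exact hab ((Prod.ext_iff.mp h).1.trans hx')
          unfold stepCount
          rw [hz, List.count_cons, List.count_cons, c1, c2]
          simp only [beq_iff_eq]
          rw [if_neg hne1, if_pos h2.symm]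
        · have := ih hnd.2 x y
          unfold stepCount at this ⊢
          rw [hz, List.count_cons, List.count_cons]
          simp only [beq_iff_eq]
          rw [if_neg (by intro h; exact h1 h.symm), if_neg (by intro h; exact h2 h.symm)]
          omega

lemma mem_sym2Steps_of_stepCount_pos [DecidableEq V] {l : List V} {x y : V}
    (h : 0 < stepCount l x y) : s(x, y) ∈ sym2Steps l := by
  unfold stepCount at h
  rcases Nat.lt_or_ge 0 ((l.zip l.tail).count (x, y)) with hp | hp
  · exact List.mem_map.mpr ⟨(x, y), List.count_pos_iff.mp hp, rfl⟩
  · have hp2 : 0 < (l.zip l.tail).count (y, x) := by omega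
    refine List.mem_map.mpr ⟨(y, x), List.count_pos_iff.mp hp2, ?_⟩
    exact (Sym2.eq_swap : s(y, x) = s(x, y))

lemma adj_of_mem_zip_chain' {R : V → V → Prop} :
    ∀ (l : List V), l.Chain' R → ∀ (p : V × V), p ∈ l.zip l.tail → R p.1 p.2 := by
  intro l
  induction l with
  | nil => intro _ p hp; simp at hp
  | cons a t ih =>
    intro hc p hp
    cases t with
    | nil => simp at hp
    | cons b t' =>
      simp only [List.Chain', List.isChain_cons_cons] at hc
      have hp' : p ∈ (a, b) :: ((b :: t').zip ((b :: t').tail)) := hp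
      rcases List.mem_cons.mp hp' with h | h
      · subst h; exact hc.1
      · exact ih hc.2 p h

lemma mult_pos_of_mem_sym2Steps {M : Multigraph V} {l : List V} (hc : l.Chain' (MAdj M))
    {x y : V} (h : s(x, y) ∈ sym2Steps l) : 0 < M.mult s(x, y) := by
  obtain ⟨p, hp, hpe⟩ := List.mem_map.mp h
  have hadj := adj_of_mem_zip_chain' l hc p hp
  unfold MAdj at hadj
  rw [← hpe]
  exact hadj

lemma walk_of_rtg {M : Multigraph V} {B : Set V} {a b : V} (ha : a ∈ B)
    (h : Relation.ReflTransGen (fun x y => x ∈ B ∧ y ∈ B ∧ MAdj M x y) a b) :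
    ∃ w : (MG M).Walk a b, ∀ v ∈ w.support, v ∈ B := by
  induction h with
  | refl => exact ⟨SimpleGraph.Walk.nil, by simpa using ha⟩
  | tail _ hbc ih =>
    obtain ⟨w, hw⟩ := ih
    refine ⟨w.concat (show (MG M).Adj _ _ from hbc.2.2), ?_⟩
    intro v hv
    rw [SimpleGraph.Walk.support_concat, List.mem_append] at hv
    rcases hv with h' | h'
    · exact hw v h'
    · rw [List.mem_singleton.mp h']
      exact hbc.2.1

lemma mpath_of_walk {M : Multigraph V} {a b : V} (w : (MG M).Walk a b)
    (h : w.support.Nodup) : MPath M a b w.support := by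
  refine ⟨w.isChain_adj_support, h, ?_, ?_⟩
  · rw [w.support_eq_cons]; rfl
  · rw [← List.head?_reverse, ← SimpleGraph.Walk.support_reverse, (w.reverse).support_eq_cons]
    rfl

lemma getLast?_support {G : SimpleGraph V} {a b : V} (w : G.Walk a b) :
    w.support.getLast? = some b := by
  rw [← List.head?_reverse, ← SimpleGraph.Walk.support_reverse, (w.reverse).support_eq_cons]
  rfl

lemma end_mem_support_tail {G : SimpleGraph V} {a b : V} (w : G.Walk a b)
    (hw : w.support.tail ≠ []) : b ∈ w.support.tail := by
  have h1 := getLast?_support w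
  rw [w.support_eq_cons, List.getLast?_eq_getLast_of_ne_nil (List.cons_ne_nil _ _),
    Option.some_inj, List.getLast_cons hw] at h1
  have h2 := List.getLast_mem hw
  rw [h1] at h2
  exact h2

lemma support_tail_ne_nil {G : SimpleGraph V} {a b : V} (w : G.Walk a b) (h : a ≠ b) :
    w.support.tail ≠ [] := by
  intro h0
  have hmem := w.end_mem_support
  rw [w.support_eq_cons, h0] at hmem
  simp at hmem
  exact h hmem.symm

lemma crossing {M : Multigraph V} {S T : Set V} :
    ∀ {u s : V} (w : (MG M).Walk u s), u ∉ S → s ∈ S → (∀ v ∈ w.support, v ∈ T) →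
      ∃ p q, (∃ w' : (MG M).Walk u p, ∀ v ∈ w'.support, v ∉ S) ∧
        MAdj M p q ∧ q ∈ S ∧ q ∈ T := by
  intro u s w
  induction w with
  | nil => intro hu hs _; exact absurd hs hu
  | cons hadj p ih =>
    intro hu hs hT
    rename_i u u' s
    by_cases hu' : u' ∈ S
    · have hq : u' ∈ (SimpleGraph.Walk.cons hadj p).support := by
        rw [SimpleGraph.Walk.support_cons]
        exact List.mem_cons_of_mem _ p.start_mem_support
      exact ⟨u, u', ⟨SimpleGraph.Walk.nil, by simpa using hu⟩, hadj, hu', hT u' hq⟩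
    · have hT' : ∀ v ∈ p.support, v ∈ T := by
        intro v hv
        apply hT
        rw [SimpleGraph.Walk.support_cons]
        exact List.mem_cons_of_mem _ hv
      obtain ⟨p', q, ⟨w', hw'⟩, h1, h2, h3⟩ := ih hu' hs hT'
      refine ⟨p', q, ⟨SimpleGraph.Walk.cons hadj w', ?_⟩, h1, h2, h3⟩
      intro v hv
      rw [SimpleGraph.Walk.support_cons] at hv
      rcases List.mem_cons.mp hv with rfl | hv'
      · exact hu
      · exact hw' v hv'

lemma edgesOn_univ [Fintype V] [DecidableEq V] (M : Multigraph V) :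
    edgesOn M Set.univ = ∑ e : Sym2 V, M.mult e := by
  unfold edgesOn
  exact Finset.sum_congr rfl fun e _ => if_pos fun v _ => Set.mem_univ v

lemma mem_edgeSet_iff_mult_pos {M : Multigraph V} (e : Sym2 V) :
    e ∈ (MG M).edgeSet ↔ 0 < M.mult e := by
  induction e using Sym2.ind with
  | _ x y => rw [SimpleGraph.mem_edgeSet]; exact Iff.rfl

lemma edgesOn_le [Fintype V] [DecidableEq V] (M : Multigraph V) (m : ℕ)
    (hm : ∀ e : Sym2 V, M.mult e ≤ m) :
    edgesOn M Set.univ ≤ m * (MG M).edgeFinset.card := by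
  rw [edgesOn_univ]
  calc ∑ e : Sym2 V, M.mult e
      ≤ ∑ e : Sym2 V, (if e ∈ (MG M).edgeFinset then m else 0) := by
        apply Finset.sum_le_sum
        intro e _
        by_cases he : e ∈ (MG M).edgeFinset
        · rw [if_pos he]; exact hm e
        · rw [if_neg he]
          have hnp : ¬0 < M.mult e := fun hp =>
            he (SimpleGraph.mem_edgeFinset.mpr ((mem_edgeSet_iff_mult_pos e).mpr hp))
          omega
    _ = m * (MG M).edgeFinset.card := by
        rw [Finset.sum_ite_mem, Finset.univ_inter, Finset.sum_const, smul_eq_mul, mul_comm]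

lemma edge_not_mem_of_support_disjoint {G : SimpleGraph V} {u v c : V}
    (w : G.Walk u v) (Cw : G.Walk c c)
    (h : ∀ x ∈ w.support, x ∉ Cw.support) : ∀ e ∈ w.edges, e ∉ Cw.edges := by
  intro e
  induction e using Sym2.ind with
  | _ p q =>
    exact fun h1 h2 => h p (SimpleGraph.Walk.fst_mem_support_of_mem_edges w h1)
      (SimpleGraph.Walk.fst_mem_support_of_mem_edges Cw h2)

/-- A connected multigraph without cut-vertices (a block) on `x' ≥ 2` vertices with
`y' ≥ x' + 1` edges contains two vertices joined by three internally disjoint paths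
(using pairwise distinct edges, so that parallel edges may serve as distinct
length-one paths). -/
theorem block_dense_three_paths [Fintype V] [DecidableEq V]
    (M : Multigraph V) (hconn : MConnOn M Set.univ)
    (hblock : MNoCutVertex M Set.univ)
    (hx : 2 ≤ Fintype.card V)
    (hy : Fintype.card V + 1 ≤ edgesOn M Set.univ) :
    ∃ (a b : V), a ≠ b ∧ ∃ l₁ l₂ l₃ : List V,
      MPath M a b l₁ ∧ MPath M a b l₂ ∧ MPath M a b l₃ ∧
      (internals l₁).Disjoint (internals l₂) ∧
      (internals l₁).Disjoint (internals l₃) ∧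
      (internals l₂).Disjoint (internals l₃) ∧
      ∀ x y : V, stepCount l₁ x y + stepCount l₂ x y + stepCount l₃ x y ≤
        M.mult s(x, y) := by
  by_cases h3 : ∃ e : Sym2 V, 3 ≤ M.mult e
  · -- Case 1: three parallel edges
    obtain ⟨e, he⟩ := h3
    revert he
    induction e using Sym2.ind with
    | _ a b =>
    intro he
    have hab : a ≠ b := by
      rintro rfl
      rw [M.loopless] at he
      omega
    have hadj : MAdj M a b := by unfold MAdj; omega
    have hnd : ([a, b] : List V).Nodup := by simp [hab]
    have hpath : MPath M a b [a, b] := ⟨List.isChain_pair.mpr hadj, hnd, rfl, rfl⟩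
    refine ⟨a, b, hab, [a, b], [a, b], [a, b], hpath, hpath, hpath,
      fun v hv => absurd hv List.not_mem_nil,
      fun v hv => absurd hv List.not_mem_nil,
      fun v hv => absurd hv List.not_mem_nil, ?_⟩
    intro x y
    by_cases hxy : s(x, y) = s(a, b)
    · have h1 := stepCount_le_one [a, b] hnd x y
      rw [hxy]
      omega
    · have h0 : stepCount [a, b] x y = 0 := by
        by_contra h
        have hm := mem_sym2Steps_of_stepCount_pos (Nat.pos_of_ne_zero h)
        simp [sym2Steps] at hm
        exact hxy (Sym2.eq_iff.mpr hm)
      rw [h0]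
      omega
  by_cases h2 : ∃ e : Sym2 V, 2 ≤ M.mult e
  · -- Case 2: a doubled edge plus an avoiding path
    obtain ⟨e, he⟩ := h2
    revert he
    induction e using Sym2.ind with
    | _ a b =>
    intro he
    have hab : a ≠ b := by
      rintro rfl
      rw [M.loopless] at he
      omega
    have hadj : MAdj M a b := by unfold MAdj; omega
    have hle2 : ∀ e : Sym2 V, M.mult e ≤ 2 := by
      intro e
      by_contra h
      exact h3 ⟨e, by omega⟩
    have hcard3 : 3 ≤ Fintype.card V := by
      by_contra h
      have hc2 : Fintype.card V = 2 := by omega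
      have hb := edgesOn_le M 2 hle2
      have hch := SimpleGraph.card_edgeFinset_le_card_choose_two (G := MG M)
      rw [hc2] at hch
      have hcc : Nat.choose 2 2 = 1 := rfl
      omega
    have hnotsub : ¬(Finset.univ : Finset V) ⊆ {a, b} := by
      intro hsub
      have h1 := Finset.card_le_card hsub
      have hc2 : ({a, b} : Finset V).card ≤ 2 :=
        (Finset.card_insert_le _ _).trans (by simp)
      rw [Finset.card_univ] at h1
      omega
    obtain ⟨c, -, hc⟩ := Finset.not_subset.mp hnotsub
    have hca : c ≠ a := by intro h; exact hc (by simp [h])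
    have hcb : c ≠ b := by intro h; exact hc (by simp [h])
    have hconn1 := hblock b (Set.mem_univ b) ⟨a, by simp [hab]⟩
    have rtg1 := hconn1.2 a (by simp [hab]) c (by simp [hcb])
    obtain ⟨w1, hw1⟩ := walk_of_rtg (show a ∈ Set.univ \ {b} by simp [hab]) rtg1
    have hconn2 := hblock a (Set.mem_univ a) ⟨b, by simp [Ne.symm hab]⟩
    have rtg2 := hconn2.2 c (by simp [hca]) b (by simp [Ne.symm hab])
    obtain ⟨w2, hw2⟩ := walk_of_rtg (show c ∈ Set.univ \ {a} by simp [hca]) rtg2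
    have hfe : s(a, b) ∉ (w1.append w2).edges := by
      intro hmem
      rw [SimpleGraph.Walk.edges_append, List.mem_append] at hmem
      rcases hmem with h | h
      · have hbmem := SimpleGraph.Walk.snd_mem_support_of_mem_edges w1 h
        have := hw1 b hbmem
        simp at this
      · have hamem := SimpleGraph.Walk.fst_mem_support_of_mem_edges w2 h
        have := hw2 a hamem
        simp at this
    have hp3path := (w1.append w2).bypass_isPath
    have hp3edges : s(a, b) ∉ (w1.append w2).bypass.edges := fun h =>
      hfe (SimpleGraph.Walk.edges_bypass_subset _ h)
    have mp3 : MPath M a b (w1.append w2).bypass.support :=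
      mpath_of_walk _ hp3path.support_nodup
    have mp1 : MPath M a b [a, b] := ⟨List.isChain_pair.mpr hadj, by simp [hab], rfl, rfl⟩
    refine ⟨a, b, hab, [a, b], [a, b], (w1.append w2).bypass.support, mp1, mp1, mp3,
      fun v hv => absurd hv List.not_mem_nil,
      fun v hv => absurd hv List.not_mem_nil,
      fun v hv => absurd hv List.not_mem_nil, ?_⟩
    intro x y
    by_cases hxy : s(x, y) = s(a, b)
    · have h1 := stepCount_le_one [a, b] (by simp [hab]) x y
      have h30 : stepCount (w1.append w2).bypass.support x y = 0 := by
        by_contra h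
        have hm := mem_sym2Steps_of_stepCount_pos (Nat.pos_of_ne_zero h)
        rw [sym2Steps_support, hxy] at hm
        exact hp3edges hm
      rw [hxy, h30]
      omega
    · have h10 : stepCount [a, b] x y = 0 := by
        by_contra h
        have hm := mem_sym2Steps_of_stepCount_pos (Nat.pos_of_ne_zero h)
        simp [sym2Steps] at hm
        exact hxy (Sym2.eq_iff.mpr hm)
      by_cases hsc : 0 < stepCount (w1.append w2).bypass.support x y
      · have hmp := mult_pos_of_mem_sym2Steps mp3.1 (mem_sym2Steps_of_stepCount_pos hsc)
        have h31 := stepCount_le_one _ mp3.2.1 x y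
        rw [h10]
        omega
      · rw [h10]
        omega
  · -- Case 3: simple graph
    have hle1 : ∀ e : Sym2 V, M.mult e ≤ 1 := by
      intro e
      by_contra h
      exact h2 ⟨e, by omega⟩
    have hnV : Nonempty V := by
      obtain ⟨v, -⟩ := hconn.1
      exact ⟨v⟩
    have hGconn : (MG M).Connected := by
      rw [SimpleGraph.connected_iff]
      refine ⟨?_, hnV⟩
      intro u v
      obtain ⟨w, -⟩ := walk_of_rtg (Set.mem_univ u)
        (hconn.2 u (Set.mem_univ u) v (Set.mem_univ v))
      exact ⟨w⟩
    have hecard : Fintype.card V + 1 ≤ (MG M).edgeFinset.card := by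
      have hb := edgesOn_le M 1 hle1
      omega
    have hnac : ¬(MG M).IsAcyclic := by
      intro hac
      have htree : (MG M).IsTree := ⟨hGconn, hac⟩
      have := htree.card_edgeFinset
      omega
    simp only [SimpleGraph.IsAcyclic, not_forall, not_not] at hnac
    obtain ⟨c0, C, hC⟩ := hnac
    have hCnd : C.support.tail.Nodup := hC.support_nodup
    have hClen : 3 ≤ C.length := hC.three_le_length
    have hCtlen : C.support.tail.length = C.length := by
      rw [List.length_tail, SimpleGraph.Walk.length_support]
      omega
    have hCtail_ne : C.support.tail ≠ [] := by
      intro h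
      rw [h] at hCtlen
      simp at hCtlen
      omega
    have hClenle : C.length ≤ Fintype.card V := by
      have := hCnd.length_le_card
      omega
    have hclt : C.edges.toFinset.card < (MG M).edgeFinset.card := by
      have h1 : C.edges.toFinset.card ≤ C.edges.length := List.toFinset_card_le _
      rw [SimpleGraph.Walk.length_edges] at h1
      omega
    obtain ⟨e, heG, heC⟩ : ∃ e ∈ (MG M).edgeFinset, e ∉ C.edges.toFinset := by
      by_contra h
      push_neg at h
      have := Finset.card_le_card (fun x hx => h x hx)
      omega
    revert heG heC
    induction e using Sym2.ind with
    | _ x₀ y₀ =>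
    intro heG heC
    have hadj₀ : MAdj M x₀ y₀ :=
      (SimpleGraph.mem_edgeSet (MG M)).mp (SimpleGraph.mem_edgeFinset.mp heG)
    have hne₀ : x₀ ≠ y₀ :=
      (MG M).ne_of_adj ((SimpleGraph.mem_edgeSet (MG M)).mp (SimpleGraph.mem_edgeFinset.mp heG))
    have heC' : s(x₀, y₀) ∉ C.edges := fun h => heC (List.mem_toFinset.mpr h)
    have key : ∀ u : V, u ∉ C.support →
        ∃ a b : V, a ≠ b ∧ a ∈ C.support ∧ b ∈ C.support ∧
          ∃ l₃ : List V, MPath M a b l₃ ∧ (∀ v ∈ internals l₃, v ∉ C.support) ∧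
            ∀ e' ∈ sym2Steps l₃, e' ∉ C.edges := by
      intro u hu
      obtain ⟨wuc, -⟩ := walk_of_rtg (Set.mem_univ u)
        (hconn.2 u (Set.mem_univ u) c0 (Set.mem_univ c0))
      obtain ⟨p₁, a, ⟨w₁, hw₁⟩, hadj₁, haS, -⟩ :=
        crossing (S := {v | v ∈ C.support}) (T := Set.univ) wuc hu C.start_mem_support
          (fun v _ => Set.mem_univ v)
      obtain ⟨d₁, d₂, t'', ht2⟩ : ∃ d₁ d₂ t'', C.support.tail = d₁ :: d₂ :: t'' := by
        rcases hl : C.support.tail with _ | ⟨d₁, _ | ⟨d₂, t''⟩⟩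
        · rw [hl] at hCtlen; simp at hCtlen; omega
        · rw [hl] at hCtlen; simp at hCtlen; omega
        · exact ⟨_, _, _, rfl⟩
      have hd12 : d₁ ≠ d₂ := by
        have hnd2 := hCnd
        rw [ht2, List.nodup_cons] at hnd2
        intro h
        exact hnd2.1 (by rw [h]; exact List.mem_cons_self)
      have haS' : a ∈ C.support := haS
      set s₁ := if d₁ = a then d₂ else d₁ with hs₁
      have hs₁S : s₁ ∈ C.support := by
        apply List.mem_of_mem_tail
        rw [ht2]
        by_cases h : d₁ = a
        · simp [hs₁, h]
        · simp [hs₁, h]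
      have hs₁a : s₁ ≠ a := by
        by_cases h : d₁ = a
        · simp only [hs₁, if_pos h]
          rw [← h]
          exact hd12.symm
        · simp only [hs₁, if_neg h]
          exact h
      have hua : u ≠ a := fun h => hu (by rw [h]; exact haS')
      have hconn' := hblock a (Set.mem_univ a) ⟨u, by simp [hua]⟩
      have rtg' := hconn'.2 u (by simp [hua]) s₁ (by simp [hs₁a])
      obtain ⟨w', hw'sup⟩ := walk_of_rtg (show u ∈ Set.univ \ {a} by simp [hua]) rtg'
      obtain ⟨p₂, b, ⟨w₂, hw₂⟩, hadj₂, hbS, hbT⟩ :=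
        crossing (S := {v | v ∈ C.support}) (T := Set.univ \ {a}) w' hu hs₁S hw'sup
      have hba : b ≠ a := by
        intro h
        rw [h] at hbT
        simp at hbT
      have hadj₁' : (MG M).Adj a p₁ := SimpleGraph.adj_symm (G := MG M) hadj₁
      have hadj₂' : (MG M).Adj p₂ b := hadj₂
      have hmidS : ∀ v ∈ (w₁.reverse.append w₂).support, v ∉ C.support := by
        intro v hv
        rw [SimpleGraph.Walk.mem_support_append_iff] at hv
        rcases hv with h | h
        · rw [SimpleGraph.Walk.support_reverse, List.mem_reverse] at h
          exact hw₁ v h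
        · exact hw₂ v h
      set full := SimpleGraph.Walk.cons hadj₁' ((w₁.reverse.append w₂).concat hadj₂')
        with hfullw
      have hfullsup : ∀ v ∈ full.support, v = a ∨ v = b ∨ v ∉ C.support := by
        intro v hv
        rw [hfullw, SimpleGraph.Walk.support_cons] at hv
        rcases List.mem_cons.mp hv with h | h
        · exact Or.inl h
        · rw [SimpleGraph.Walk.support_concat, List.mem_append] at h
          rcases h with h | h
          · exact Or.inr (Or.inr (hmidS v h))
          · exact Or.inr (Or.inl (List.mem_singleton.mp h))
      have hp₁S : p₁ ∉ C.support := hw₁ p₁ w₁.end_mem_support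
      have hp₂S : p₂ ∉ C.support := hw₂ p₂ w₂.end_mem_support
      have hfulledges : ∀ e' ∈ full.edges, e' ∉ C.edges := by
        intro e' he' heC2
        rw [hfullw, SimpleGraph.Walk.edges_cons] at he'
        rcases List.mem_cons.mp he' with h | h
        · rw [h] at heC2
          exact hp₁S (SimpleGraph.Walk.snd_mem_support_of_mem_edges C heC2)
        · rw [SimpleGraph.Walk.edges_concat, List.concat_eq_append, List.mem_append] at h
          rcases h with h | h
          · exact edge_not_mem_of_support_disjoint (w₁.reverse.append w₂) C hmidS e' h heC2
          · rw [List.mem_singleton.mp h] at heC2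
            exact hp₂S (SimpleGraph.Walk.fst_mem_support_of_mem_edges C heC2)
      have hbp := full.bypass_isPath
      have hmp : MPath M a b full.bypass.support := mpath_of_walk _ hbp.support_nodup
      refine ⟨a, b, hba.symm, haS', hbS, full.bypass.support, hmp, ?_, ?_⟩
      · intro v hv
        have hvs : v ∈ full.support :=
          SimpleGraph.Walk.support_bypass_subset full (mem_of_mem_internals hv)
        have hva : v ≠ a := not_head_of_mem_internals hbp.support_nodup hmp.2.2.1 hv
        have hvb : v ≠ b := not_last_of_mem_internals hbp.support_nodup hmp.2.2.2 hv
        rcases hfullsup v hvs with h | h | h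
        · exact absurd h hva
        · exact absurd h hvb
        · exact h
      · intro e' he'
        rw [sym2Steps_support] at he'
        exact hfulledges e' (SimpleGraph.Walk.edges_bypass_subset full he')
    have EAR : ∃ a b : V, a ≠ b ∧ a ∈ C.support ∧ b ∈ C.support ∧
        ∃ l₃ : List V, MPath M a b l₃ ∧ (∀ v ∈ internals l₃, v ∉ C.support) ∧
          ∀ e' ∈ sym2Steps l₃, e' ∉ C.edges := by
      by_cases hin : x₀ ∈ C.support ∧ y₀ ∈ C.support
      · refine ⟨x₀, y₀, hne₀, hin.1, hin.2, [x₀, y₀],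
          ⟨List.isChain_pair.mpr hadj₀, by simp [hne₀], rfl, rfl⟩,
          fun v hv => absurd hv List.not_mem_nil, ?_⟩
        intro e' he'
        simp [sym2Steps] at he'
        rw [he']
        exact heC'
      · rcases not_and_or.mp hin with h | h
        · exact key x₀ h
        · exact key y₀ h
    obtain ⟨a, b, hab, haS, hbS, l₃, mp3, hint3, hedg3⟩ := EAR
    have hC' : (C.rotate a haS).IsCycle := hC.rotate haS
    have hrotsup := SimpleGraph.Walk.support_rotate C a haS
    have hrotedg := SimpleGraph.Walk.rotate_edges C a haS
    have hbS' := hbS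
    rw [C.support_eq_cons] at hbS'
    have hbtail : b ∈ C.support.tail := by
      rcases List.mem_cons.mp hbS' with h | h
      · rw [h]; exact end_mem_support_tail C hCtail_ne
      · exact h
    have hbC' : b ∈ (C.rotate a haS).support := by
      apply List.mem_of_mem_tail
      exact (hrotsup.perm.mem_iff).mpr hbtail
    set w1 := (C.rotate a haS).takeUntil b hbC' with hw1def
    set w2 := (C.rotate a haS).dropUntil b hbC' with hw2def
    have hspec := (C.rotate a haS).take_spec hbC'
    have htail := SimpleGraph.Walk.tail_support_append w1 w2
    rw [hspec] at htail
    have hndC' : (C.rotate a haS).support.tail.Nodup := hC'.support_nodup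
    rw [htail] at hndC'
    obtain ⟨nd1, nd2, disjT⟩ := List.nodup_append'.mp hndC'
    have hedges := SimpleGraph.Walk.edges_append w1 w2
    rw [hspec] at hedges
    have hndE : (C.rotate a haS).edges.Nodup := hC'.edges_nodup
    rw [hedges] at hndE
    have disjE : w1.edges.Disjoint w2.edges := (List.nodup_append'.mp hndE).2.2
    have hy1 : b ∈ w1.support.tail := end_mem_support_tail w1 (support_tail_ne_nil w1 hab)
    have hx2 : a ∈ w2.support.tail := end_mem_support_tail w2 (support_tail_ne_nil w2 hab.symm)
    have nds1 : w1.support.Nodup := by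
      rw [w1.support_eq_cons, List.nodup_cons]
      exact ⟨fun h => disjT h hx2, nd1⟩
    have nds2 : w2.support.Nodup := by
      rw [w2.support_eq_cons, List.nodup_cons]
      exact ⟨fun h => disjT hy1 h, nd2⟩
    have ndP2 : w2.reverse.support.Nodup := by
      rw [SimpleGraph.Walk.support_reverse, List.nodup_reverse]
      exact nds2
    have mp1 : MPath M a b w1.support := mpath_of_walk w1 nds1
    have mp2 : MPath M a b w2.reverse.support := mpath_of_walk w2.reverse ndP2
    have hsub1 : ∀ v ∈ internals w1.support, v ∈ w1.support.tail :=
      fun v hv => mem_tail_of_mem_internals hv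
    have hsub2 : ∀ v ∈ internals w2.reverse.support, v ∈ w2.support.tail := by
      intro v hv
      rw [SimpleGraph.Walk.support_reverse, internals_reverse, List.mem_reverse] at hv
      exact mem_tail_of_mem_internals hv
    have htailS : ∀ v, v ∈ w1.support.tail ∨ v ∈ w2.support.tail → v ∈ C.support := by
      intro v hv
      have h1 : v ∈ (C.rotate a haS).support.tail := by
        rw [htail, List.mem_append]
        exact hv
      exact List.mem_of_mem_tail ((hrotsup.perm.mem_iff).mp h1)
    refine ⟨a, b, hab, w1.support, w2.reverse.support, l₃, mp1, mp2, mp3, ?_, ?_, ?_, ?_⟩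
    · intro v hv1 hv2
      exact disjT (hsub1 v hv1) (hsub2 v hv2)
    · intro v hv1 hv3
      exact hint3 v hv3 (htailS v (Or.inl (hsub1 v hv1)))
    · intro v hv2 hv3
      exact hint3 v hv3 (htailS v (Or.inr (hsub2 v hv2)))
    · intro x y
      by_cases hm : 0 < M.mult s(x, y)
      · have f1 := stepCount_le_one w1.support nds1 x y
        have f2 := stepCount_le_one w2.reverse.support ndP2 x y
        have f3 := stepCount_le_one l₃ mp3.2.1 x y
        have m1 : 0 < stepCount w1.support x y → s(x, y) ∈ w1.edges := by
          intro h
          have hh := mem_sym2Steps_of_stepCount_pos h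
          rwa [sym2Steps_support] at hh
        have m2 : 0 < stepCount w2.reverse.support x y → s(x, y) ∈ w2.edges := by
          intro h
          have hh := mem_sym2Steps_of_stepCount_pos h
          rw [sym2Steps_support, SimpleGraph.Walk.edges_reverse, List.mem_reverse] at hh
          exact hh
        have m3 : 0 < stepCount l₃ x y → s(x, y) ∉ C.edges :=
          fun h => hedg3 _ (mem_sym2Steps_of_stepCount_pos h)
        have hCedge : ∀ e', e' ∈ w1.edges ∨ e' ∈ w2.edges → e' ∈ C.edges := by
          intro e' h'
          apply (hrotedg.perm.mem_iff).mp
          rw [hedges, List.mem_append]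
          exact h'
        have h12 : stepCount w1.support x y = 0 ∨ stepCount w2.reverse.support x y = 0 := by
          by_contra hcon
          push_neg at hcon
          exact disjE (m1 (Nat.pos_of_ne_zero hcon.1)) (m2 (Nat.pos_of_ne_zero hcon.2))
        have h13 : stepCount w1.support x y = 0 ∨ stepCount l₃ x y = 0 := by
          by_contra hcon
          push_neg at hcon
          exact m3 (Nat.pos_of_ne_zero hcon.2)
            (hCedge _ (Or.inl (m1 (Nat.pos_of_ne_zero hcon.1))))
        have h23 : stepCount w2.reverse.support x y = 0 ∨ stepCount l₃ x y = 0 := by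
          by_contra hcon
          push_neg at hcon
          exact m3 (Nat.pos_of_ne_zero hcon.2)
            (hCedge _ (Or.inr (m2 (Nat.pos_of_ne_zero hcon.1))))
        rcases h12 with h12 | h12 <;> rcases h13 with h13 | h13 <;>
          rcases h23 with h23 | h23 <;> omega
      · have hz : ∀ l : List V, l.Chain' (MAdj M) → stepCount l x y = 0 := by
          intro l hc
          by_contra h
          exact hm (mult_pos_of_mem_sym2Steps hc
            (mem_sym2Steps_of_stepCount_pos (Nat.pos_of_ne_zero h)))
        rw [hz _ mp1.1, hz _ mp2.1, hz _ mp3.1]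
        omega
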